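/- Let λ be a real number with 0 < λ < 1/e and let f : ℂ → ℂ be the exponential function f(z) = λ·e^z. Then K(f) is connected. -/

import Mathlib

open Filter Topology

/-- The set `K(f)` of points whose orbit under iteration of `f` is bounded. -/
def boundedOrbitSet (f : ℂ → ℂ) : Set ℂ :=
  {z : ℂ | Bornology.IsBounded (Set.range fun n : ℕ => f^[n] z)}

/-- `f` is a transcendental entire function: holomorphic on all of `ℂ` and not a polynomial. -/
def TranscendentalEntire (f : ℂ → ℂ) : Prop :=
  Differentiable ℂ f ∧ ¬∃ p : Polynomial ℂ, ∀ z, f z = p.eval z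

section Aux

open Metric Set

/-- A punctured ball in `ℂ` is preconnected. -/
lemma punctured_ball_preconnected {ε : ℝ} (hε : 0 < ε) :
    IsPreconnected (Metric.ball (0:ℂ) ε \ {0}) := by
  have h2 : (1:Cardinal) < Module.rank ℝ ℂ := by
    rw [Complex.rank_real_complex]; exact Cardinal.one_lt_two
  have hsph : IsConnected (Metric.sphere (0:ℂ) 1) := isConnected_sphere h2 0 zero_le_one
  have hIoo : IsConnected (Set.Ioo (0:ℝ) ε) := isConnected_Ioo hε
  have hprod : IsConnected ((Set.Ioo (0:ℝ) ε) ×ˢ (Metric.sphere (0:ℂ) 1)) :=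
    hIoo.prod hsph
  have himg : IsConnected ((fun p : ℝ × ℂ => p.1 • p.2) '' ((Set.Ioo (0:ℝ) ε) ×ˢ (Metric.sphere (0:ℂ) 1))) :=
    hprod.image _ (Continuous.continuousOn (continuous_fst.smul continuous_snd))
  have heq : (fun p : ℝ × ℂ => p.1 • p.2) '' ((Set.Ioo (0:ℝ) ε) ×ˢ (Metric.sphere (0:ℂ) 1))
      = Metric.ball (0:ℂ) ε \ {0} := by
    ext z
    constructor
    · rintro ⟨⟨r, u⟩, ⟨⟨hr0, hrε⟩, hu⟩, rfl⟩
      have hu1 : ‖u‖ = 1 := by simpa using hu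
      have : ‖r • u‖ = r := by
        rw [norm_smul, hu1, mul_one, Real.norm_eq_abs, abs_of_pos hr0]
      constructor
      · rw [Metric.mem_ball, dist_zero_right, this]; exact hrε
      · simp only [Set.mem_singleton_iff]
        intro h
        rw [h, norm_zero] at this
        exact hr0.ne this
    · rintro ⟨hz, hz0⟩
      have hz0' : z ≠ 0 := by simpa using hz0
      have hzn : 0 < ‖z‖ := norm_pos_iff.mpr hz0'
      refine ⟨(‖z‖, ‖z‖⁻¹ • z), ⟨⟨hzn, ?_⟩, ?_⟩, ?_⟩
      · simpa [Metric.mem_ball, dist_eq_norm] using hz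
      · rw [mem_sphere_zero_iff_norm, norm_smul, norm_inv, norm_norm, inv_mul_cancel₀ hzn.ne']
      · show ‖z‖ • ‖z‖⁻¹ • z = z
        rw [smul_smul, mul_inv_cancel₀ hzn.ne', one_smul]
  rw [heq] at himg
  exact himg.isPreconnected

lemma real_mem_punctured_ball {ε : ℝ} (hε : 0 < ε) :
    ((ε/2 : ℝ) : ℂ) ∈ Metric.ball (0:ℂ) ε \ {0} := by
  constructor
  · rw [Metric.mem_ball, dist_zero_right, Complex.norm_real, Real.norm_eq_abs,
      abs_of_pos (by linarith)]
    linarith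
  · simp only [Set.mem_singleton_iff]
    intro h
    have : (ε/2 : ℝ) = 0 := by exact_mod_cast h
    linarith

/-- Removing `0` from an open preconnected subset of `ℂ` containing `0`
keeps it preconnected. -/
lemma puncture_preconnected {W : Set ℂ} (hWo : IsOpen W) (hWc : IsPreconnected W)
    (h0 : (0:ℂ) ∈ W) : IsPreconnected (W \ {0}) := by
  rintro u v hu hv hsub ⟨a, ha, hau⟩ ⟨b, hb, hbv⟩
  by_contra hemp
  rw [Set.not_nonempty_iff_eq_empty] at hemp
  obtain ⟨ε, hε, hball⟩ := Metric.isOpen_iff.mp hWo 0 h0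
  set P := Metric.ball (0:ℂ) ε \ {0} with hPdef
  have hP : IsPreconnected P := punctured_ball_preconnected hε
  have hPsub : P ⊆ W \ {0} := fun x hx => ⟨hball hx.1, hx.2⟩
  have hPuv : P ⊆ u ∪ v := hPsub.trans hsub
  have hPcases : P ⊆ u ∨ P ⊆ v := by
    by_contra hc
    push_neg at hc
    obtain ⟨x, hx, hxu⟩ := Set.not_subset.mp hc.1
    obtain ⟨y, hy, hyv⟩ := Set.not_subset.mp hc.2
    have hxv : x ∈ v := (hPuv hx).resolve_left hxu
    have hyu : y ∈ u := (hPuv hy).resolve_right hyv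
    obtain ⟨w, hw⟩ := hP u v hu hv hPuv ⟨y, hy, hyu⟩ ⟨x, hx, hxv⟩
    have : w ∈ (W \ {0}) ∩ (u ∩ v) := ⟨hPsub hw.1, hw.2⟩
    rw [hemp] at this; exact this
  have main : ∀ u' v' : Set ℂ, IsOpen u' → IsOpen v' → (W \ {0}) ⊆ u' ∪ v' →
      ((W \ {0}) ∩ (u' ∩ v') = ∅) → P ⊆ u' →
      ¬ ((W \ {0}) ∩ v').Nonempty := by
    rintro u' v' hu' hv' hsub' hemp' hPu' ⟨c, hc, hcv⟩
    have h0v : (0:ℂ) ∈ v' → False := by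
      intro h0v
      obtain ⟨δ, hδ, hδball⟩ := Metric.isOpen_iff.mp hv' 0 h0v
      set q : ℂ := (((min ε δ)/2 : ℝ) : ℂ) with hq
      have hqP : q ∈ P ∧ q ∈ Metric.ball (0:ℂ) δ := by
        have h1 := real_mem_punctured_ball (lt_min hε hδ)
        constructor
        · exact ⟨Metric.ball_subset_ball (min_le_left ε δ) h1.1, h1.2⟩
        · exact Metric.ball_subset_ball (min_le_right ε δ) h1.1
      have : q ∈ (W \ {0}) ∩ (u' ∩ v') :=
        ⟨hPsub hqP.1, hPu' hqP.1, hδball hqP.2⟩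
      rw [hemp'] at this; exact this
    have hWsub : W ⊆ (u' ∪ Metric.ball 0 ε) ∪ v' := by
      intro x hx
      by_cases hx0 : x = 0
      · exact Or.inl (Or.inr (by simp [hx0, hε]))
      · rcases hsub' ⟨hx, hx0⟩ with h | h
        · exact Or.inl (Or.inl h)
        · exact Or.inr h
    obtain ⟨w, hwW, hw1, hw2⟩ := hWc (u' ∪ Metric.ball 0 ε) v' (hu'.union Metric.isOpen_ball)
      hv' hWsub ⟨0, h0, Or.inr (by simp [hε])⟩ ⟨c, hc.1, hcv⟩
    by_cases hw0 : w = 0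
    · exact h0v (hw0 ▸ hw2)
    · have hwu : w ∈ u' := by
        rcases hw1 with h | h
        · exact h
        · exact hPu' ⟨h, hw0⟩
      have : w ∈ (W \ {0}) ∩ (u' ∩ v') := ⟨⟨hwW, hw0⟩, hwu, hw2⟩
      rw [hemp'] at this; exact this
  rcases hPcases with h | h
  · exact main u v hu hv hsub hemp h ⟨b, hb, hbv⟩
  · refine main v u hv hu (by rw [Set.union_comm]; exact hsub) ?_ h ⟨a, ha, hau⟩
    rw [Set.inter_comm v u]; exact hemp

/-- The preimage of an open preconnected set containing `0` under `exp` is preconnected. -/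
lemma exp_preimage_preconnected {W : Set ℂ} (hWo : IsOpen W) (hWc : IsPreconnected W)
    (h0 : (0:ℂ) ∈ W) : IsPreconnected (Complex.exp ⁻¹' W) := by
  set s := Complex.exp ⁻¹' W with hsdef
  have hsOpen : IsOpen s := hWo.preimage Complex.continuous_exp
  rintro u v hu hv hsub ⟨a, ha, hau⟩ ⟨b, hb, hbv⟩
  by_contra hemp
  rw [Set.not_nonempty_iff_eq_empty] at hemp
  obtain ⟨ε, hε, hball⟩ := Metric.isOpen_iff.mp hWo 0 h0
  set HL : Set ℂ := {z : ℂ | z.re < Real.log ε} with hHLdef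
  have hHLs : HL ⊆ s := by
    intro z hz
    have : ‖Complex.exp z‖ < ε := by
      rw [Complex.norm_exp]
      calc Real.exp z.re < Real.exp (Real.log ε) := Real.exp_lt_exp.mpr hz
        _ = ε := Real.exp_log hε
    exact hball (by rwa [Metric.mem_ball, dist_zero_right])
  have hHLpre : IsPreconnected HL := (convex_halfSpace_re_lt (Real.log ε)).isPreconnected
  have hHLne : HL.Nonempty := ⟨((Real.log ε - 1 : ℝ) : ℂ), by simp [hHLdef]⟩
  have hHLuv : HL ⊆ u ∪ v := hHLs.trans hsub
  have hHLcases : HL ⊆ u ∨ HL ⊆ v := by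
    by_contra hc
    push_neg at hc
    obtain ⟨x, hx, hxu⟩ := Set.not_subset.mp hc.1
    obtain ⟨y, hy, hyv⟩ := Set.not_subset.mp hc.2
    have hxv : x ∈ v := (hHLuv hx).resolve_left hxu
    have hyu : y ∈ u := (hHLuv hy).resolve_right hyv
    obtain ⟨w, hw⟩ := hHLpre u v hu hv hHLuv ⟨y, hy, hyu⟩ ⟨x, hx, hxv⟩
    have : w ∈ s ∩ (u ∩ v) := ⟨hHLs hw.1, hw.2⟩
    rw [hemp] at this; exact this
  have main : ∀ u' v' : Set ℂ, IsOpen u' → IsOpen v' → s ⊆ u' ∪ v' →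
      (s ∩ (u' ∩ v') = ∅) → HL ⊆ u' → ¬ (s ∩ v').Nonempty := by
    rintro u' v' hu' hv' hsub' hemp' hHLu' ⟨c, hcs, hcv⟩
    set T := Complex.exp '' (s ∩ v') with hTdef
    have hTopen : IsOpen T := Complex.isOpenMap_exp _ (hsOpen.inter hv')
    have hTsub : T ⊆ W \ {0} := by
      rintro _ ⟨z, hz, rfl⟩
      exact ⟨hz.1, Complex.exp_ne_zero z⟩
    -- T is closed in W \ {0}
    have hclosed : ∀ w ∈ W \ {0}, w ∈ closure T → w ∈ T := by
      rintro w ⟨hwW, hw0⟩ hwc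
      have hw0' : w ≠ 0 := by simpa using hw0
      set z0 := Complex.log w with hz0def
      have hexpz0 : Complex.exp z0 = w := Complex.exp_log hw0'
      have hz0s : z0 ∈ s := by rw [hsdef, Set.mem_preimage, hexpz0]; exact hwW
      obtain ⟨δ, hδ, hδball⟩ := Metric.isOpen_iff.mp hsOpen z0 hz0s
      have hnbhd : Complex.exp '' Metric.ball z0 δ ∈ 𝓝 w :=
        (Complex.isOpenMap_exp _ Metric.isOpen_ball).mem_nhds ⟨z0, Metric.mem_ball_self hδ, hexpz0⟩
      obtain ⟨p, hpB, hpT⟩ := mem_closure_iff_nhds.mp hwc _ hnbhd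
      obtain ⟨bb, hbb, hbbeq⟩ := hpB
      obtain ⟨z1, hz1, hz1eq⟩ := hpT
      have hee : Complex.exp z1 = Complex.exp bb := by rw [hz1eq, hbbeq]
      obtain ⟨k, hk⟩ := Complex.exp_eq_exp_iff_exists_int.mp hee
      set cc : ℂ := k * (2 * Real.pi * Complex.I) with hccdef
      have hper : ∀ x : ℂ, Complex.exp (x + cc) = Complex.exp x := by
        intro x
        rw [Complex.exp_add, Complex.exp_int_mul_two_pi_mul_I, mul_one]
      have hB's : Metric.ball (z0 + cc) δ ⊆ s := by
        intro x hx
        have : x - cc ∈ Metric.ball z0 δ := by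
          rw [Metric.mem_ball] at hx ⊢
          rw [dist_eq_norm] at hx ⊢
          convert hx using 2; ring
        have hxs : x - cc ∈ s := hδball this
        rw [hsdef, Set.mem_preimage] at hxs ⊢
        rwa [show x = (x - cc) + cc by ring, hper]
      have hz1B' : z1 ∈ Metric.ball (z0 + cc) δ := by
        rw [Metric.mem_ball, dist_eq_norm, hk]
        rw [Metric.mem_ball, dist_eq_norm] at hbb
        convert hbb using 2; ring
      have hz0cv : z0 + cc ∈ v' := by
        by_contra hz0cu
        have hz0cs : z0 + cc ∈ s := hB's (Metric.mem_ball_self hδ)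
        have hz0cu' : z0 + cc ∈ u' := (hsub' hz0cs).resolve_right hz0cu
        obtain ⟨q, hq⟩ := (convex_ball (z0 + cc) δ).isPreconnected u' v' hu' hv'
          (hB's.trans hsub') ⟨z0 + cc, Metric.mem_ball_self hδ, hz0cu'⟩ ⟨z1, hz1B', hz1.2⟩
        have : q ∈ s ∩ (u' ∩ v') := ⟨hB's hq.1, hq.2⟩
        rw [hemp'] at this; exact this
      refine ⟨z0 + cc, ⟨hB's (Metric.mem_ball_self hδ), hz0cv⟩, ?_⟩
      rw [hper, hexpz0]
    -- conclude T = W \ {0}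
    have hWpunc : IsPreconnected (W \ {0}) := puncture_preconnected hWo hWc h0
    have hTne : ((W \ {0}) ∩ T).Nonempty :=
      ⟨Complex.exp c, hTsub ⟨c, ⟨hcs, hcv⟩, rfl⟩, ⟨c, ⟨hcs, hcv⟩, rfl⟩⟩
    have hTall : W \ {0} ⊆ closure T := by
      by_contra hc
      obtain ⟨w0, hw0, hw0c⟩ := Set.not_subset.mp hc
      obtain ⟨q, hq⟩ := hWpunc T (closure T)ᶜ hTopen (isClosed_closure.isOpen_compl)
        (fun x hx => (Classical.em (x ∈ closure T)).elim
          (fun h => Or.inl (hclosed x hx h)) Or.inr)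
        hTne ⟨w0, hw0, hw0c⟩
      exact hq.2.2 (subset_closure hq.2.1)
    -- the small real point ε/2 lies in T, giving a contradiction
    have hq2 : ((ε/2 : ℝ) : ℂ) ∈ W \ {0} := by
      have h := real_mem_punctured_ball hε
      exact ⟨hball h.1, h.2⟩
    have hq2T : ((ε/2 : ℝ) : ℂ) ∈ T := hclosed _ hq2 (hTall hq2)
    obtain ⟨z, hz, hzeq⟩ := hq2T
    have hzre : z.re < Real.log ε := by
      have habs : Real.exp z.re = ε / 2 := by
        have := congrArg (norm : ℂ → ℝ) hzeq
        rwa [Complex.norm_exp, Complex.norm_real, Real.norm_eq_abs, abs_of_pos (by linarith)] at this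
      have : Real.exp z.re < Real.exp (Real.log ε) := by
        rw [habs, Real.exp_log hε]; linarith
      exact Real.exp_lt_exp.mp this
    have hzu : z ∈ u' := hHLu' hzre
    have : z ∈ s ∩ (u' ∩ v') := ⟨hz.1, hzu, hz.2⟩
    rw [hemp'] at this; exact this
  rcases hHLcases with h | h
  · exact main u v hu hv hsub hemp h ⟨b, hb, hbv⟩
  · refine main v u hv hu (by rw [Set.union_comm]; exact hsub) ?_ h ⟨a, ha, hau⟩
    rw [Set.inter_comm v u]; exact hemp

end Aux

section Main

open Metric Set

/-- For `f(z) = λ e^z` with `0 < λ < 1/e`, the set `K(f)` is connected. -/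
theorem Kf_connected_exponential (lam : ℝ) (h1 : 0 < lam) (h2 : lam < 1 / Real.exp 1)
    (f : ℂ → ℂ) (hf : ∀ z : ℂ, f z = (lam : ℂ) * Complex.exp z) :
    IsConnected (boundedOrbitSet f) := by
  have hfeq : f = fun z => (lam : ℂ) * Complex.exp z := funext hf
  subst hfeq
  set f : ℂ → ℂ := fun z => (lam : ℂ) * Complex.exp z with hfdef
  -- basic facts
  have hlamexp : lam * Real.exp 1 < 1 := (lt_div_iff₀ (Real.exp_pos 1)).mp h2
  have habs : ∀ z : ℂ, ‖f z‖ = lam * Real.exp z.re := by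
    intro z
    rw [hfdef]
    simp only [norm_mul, Complex.norm_real, Real.norm_eq_abs, abs_of_pos h1, Complex.norm_exp]
  have hstep : ∀ z : ℂ, z.re < 1 → ‖f z‖ < 1 := by
    intro z hz
    rw [habs]
    calc lam * Real.exp z.re < lam * Real.exp 1 :=
          (mul_lt_mul_iff_right₀ h1).mpr (Real.exp_lt_exp.mpr hz)
      _ < 1 := hlamexp
  have habslt : ∀ w : ℂ, ‖w‖ < 1 → w.re < 1 := fun w hw =>
    lt_of_le_of_lt (Complex.re_le_norm w) hw
  have hdiff : Differentiable ℂ f := (differentiable_const _).mul Complex.differentiable_exp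
  have hcont : Continuous f := hdiff.continuous
  -- the basin
  set U : Set ℂ := {z : ℂ | z.re < 1} with hUdef
  set Un : ℕ → Set ℂ := fun n => (f^[n]) ⁻¹' U with hUndef
  set A : Set ℂ := ⋃ n, Un n with hAdef
  have hUopen : IsOpen U := isOpen_lt Complex.continuous_re continuous_const
  have h0orbit : ∀ n, (f^[n] 0).re < 1 := by
    intro n
    induction n with
    | zero => simp
    | succ n ih =>
      rw [Function.iterate_succ_apply']
      exact habslt _ (hstep _ ih)
  have h0Un : ∀ n, (0:ℂ) ∈ Un n := h0orbit
  have hUn_succ : ∀ n, Un (n+1) = f ⁻¹' (Un n) := by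
    intro n
    ext z
    simp [hUndef, Function.iterate_succ_apply]
  have hUnprops : ∀ n, IsOpen (Un n) ∧ IsPreconnected (Un n) := by
    intro n
    induction n with
    | zero =>
      exact ⟨hUopen, (convex_halfSpace_re_lt 1).isPreconnected⟩
    | succ n ih =>
      rw [hUn_succ n]
      constructor
      · exact ih.1.preimage hcont
      · -- f ⁻¹' (Un n) = exp ⁻¹' W' where W' = (lam * ·) ⁻¹' (Un n)
        set W' : Set ℂ := (fun w => (lam:ℂ) * w) ⁻¹' (Un n) with hW'def
        have hlamne : (lam:ℂ) ≠ 0 := Complex.ofReal_ne_zero.mpr h1.ne'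
        have hW'open : IsOpen W' := ih.1.preimage (continuous_const.mul continuous_id)
        have hW'pre : IsPreconnected W' := by
          have himg : W' = (fun w => (lam:ℂ)⁻¹ * w) '' (Un n) := by
            ext w
            constructor
            · intro hw
              exact ⟨(lam:ℂ) * w, hw, by field_simp⟩
            · rintro ⟨x, hx, rfl⟩
              show (lam:ℂ) * ((lam:ℂ)⁻¹ * x) ∈ Un n
              rwa [← mul_assoc, mul_inv_cancel₀ hlamne, one_mul]
          rw [himg]
          exact ih.2.image _ (continuous_const.mul continuous_id).continuousOn
        have h0W' : (0:ℂ) ∈ W' := by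
          show (lam:ℂ) * 0 ∈ Un n
          rw [mul_zero]; exact h0Un n
        have : f ⁻¹' (Un n) = Complex.exp ⁻¹' W' := rfl
        rw [this]
        exact exp_preimage_preconnected hW'open hW'pre h0W'
  have hApre : IsPreconnected A :=
    isPreconnected_iUnion ⟨0, Set.mem_iInter.mpr h0Un⟩ fun n => (hUnprops n).2
  have hAconn : IsConnected A := ⟨⟨0, Set.mem_iUnion.mpr ⟨0, h0Un 0⟩⟩, hApre⟩
  -- A is contained in the bounded orbit set
  have hAK : A ⊆ boundedOrbitSet f := by
    intro z hz
    obtain ⟨n, hn⟩ := Set.mem_iUnion.mp hz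
    have hsmall : ∀ k, ‖f^[n+1+k] z‖ < 1 := by
      intro k
      induction k with
      | zero =>
        rw [Nat.add_zero, Function.iterate_succ_apply']
        exact hstep _ hn
      | succ k ih =>
        have : n+1+(k+1) = (n+1+k)+1 := by ring
        rw [this, Function.iterate_succ_apply']
        exact hstep _ (habslt _ ih)
    have hsub : Set.range (fun m : ℕ => f^[m] z) ⊆
        (fun m : ℕ => f^[m] z) '' (Set.Iic n) ∪ Metric.closedBall 0 1 := by
      rintro _ ⟨m, rfl⟩
      by_cases hm : m ≤ n
      · exact Or.inl ⟨m, hm, rfl⟩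
      · push_neg at hm
        obtain ⟨k, rfl⟩ : ∃ k, m = n+1+k := ⟨m - (n+1), by omega⟩
        refine Or.inr ?_
        rw [Metric.mem_closedBall, dist_zero_right]
        exact (hsmall k).le
    exact Bornology.IsBounded.subset
      ((((Set.finite_Iic n).image _).isBounded).union Metric.isBounded_closedBall) hsub
  -- the bounded orbit set is contained in the closure of A
  have hKA : boundedOrbitSet f ⊆ closure A := by
    intro z hz
    by_contra hzc
    rw [Metric.mem_closure_iff] at hzc
    push_neg at hzc
    obtain ⟨r, hr, hfar⟩ := hzc
    have hRe1 : ∀ w : ℂ, dist z w < r → ∀ n, 1 ≤ (f^[n] w).re := by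
      intro w hw n
      by_contra hc
      push_neg at hc
      exact absurd (hfar w (Set.mem_iUnion.mpr ⟨n, hc⟩)) (not_le.mpr hw)
    set β : ℝ := Real.log lam⁻¹ with hβdef
    have hβ1 : 1 < β := by
      rw [hβdef, Real.lt_log_iff_exp_lt (inv_pos.mpr h1)]
      rw [lt_div_iff₀ (Real.exp_pos 1)] at h2
      rw [lt_inv_comm₀ (Real.exp_pos 1) h1]
      calc lam = lam * 1 := (mul_one lam).symm
        _ < 1 / Real.exp 1 * 1 := by
            rw [mul_one, mul_one]
            exact (lt_div_iff₀ (Real.exp_pos 1)).mpr h2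
        _ = (Real.exp 1)⁻¹ := by rw [mul_one, one_div]
    have hβpos : 0 < β := lt_trans one_pos hβ1
    have hβre : ∀ w : ℂ, dist z w < r → ∀ n, β ≤ (f^[n] w).re := by
      intro w hw n
      have h1n := hRe1 w hw (n+1)
      rw [Function.iterate_succ_apply'] at h1n
      have habs1 : 1 ≤ lam * Real.exp ((f^[n] w).re) := by
        calc (1:ℝ) ≤ (f (f^[n] w)).re := h1n
          _ ≤ ‖f (f^[n] w)‖ := Complex.re_le_norm _
          _ = lam * Real.exp ((f^[n] w).re) := habs _
      have hinvle : lam⁻¹ ≤ Real.exp ((f^[n] w).re) := by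
        rw [inv_le_iff_one_le_mul₀ h1]
        linarith [habs1]
      rw [hβdef, Real.log_le_iff_le_exp (inv_pos.mpr h1)]
      exact hinvle
    have hβabs : ∀ w : ℂ, dist z w < r → ∀ n, β ≤ ‖f^[n] w‖ :=
      fun w hw n => le_trans (hβre w hw n) (Complex.re_le_norm _)
    -- bound on the orbit of z
    have hzb : Bornology.IsBounded (Set.range fun n : ℕ => f^[n] z) := hz
    obtain ⟨M, hM⟩ := isBounded_iff_forall_norm_le.mp hzb
    have hM' : ∀ n, ‖f^[n] z‖ ≤ M := fun n =>
      hM _ ⟨n, rfl⟩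
    have hMpos : 0 < M :=
      lt_of_lt_of_le hβpos (le_trans (hβabs z (by simp [hr]) 0) (hM' 0))
    -- derivative of the iterates
    have hD : ∀ (n : ℕ) (w : ℂ),
        HasDerivAt (f^[n]) (∏ k ∈ Finset.range n, f (f^[k] w)) w := by
      intro n
      induction n with
      | zero => intro w; simpa using hasDerivAt_id w
      | succ n ih =>
        intro w
        rw [Finset.prod_range_succ]
        have hcomp : HasDerivAt (f ∘ f^[n])
            (f (f^[n] w) * ∏ k ∈ Finset.range n, f (f^[k] w)) w := by
          refine HasDerivAt.comp w ?_ (ih w)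
          have : HasDerivAt f ((lam:ℂ) * Complex.exp (f^[n] w)) (f^[n] w) :=
            (Complex.hasDerivAt_exp (f^[n] w)).const_mul (lam:ℂ)
          exact this
        rw [← Function.iterate_succ_apply' f n] at hcomp
        have := hcomp
        rw [← Function.iterate_succ' f n] at this
        convert this using 1
        rw [Function.iterate_succ_apply']
        ring
    have hprod : ∀ n : ℕ, β ^ n ≤ ‖∏ k ∈ Finset.range n, f (f^[k] z)‖ := by
      intro n
      rw [norm_prod]
      calc β ^ n = ∏ _k ∈ Finset.range n, β := by
            rw [Finset.prod_const, Finset.card_range]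
        _ ≤ ∏ k ∈ Finset.range n, ‖f (f^[k] z)‖ := by
            refine Finset.prod_le_prod (fun k _ => hβpos.le) (fun k _ => ?_)
            have h := hβabs z (by simpa using hr) (k+1)
            rwa [Function.iterate_succ_apply'] at h
    have hCauchy : ∀ n : ℕ, β ^ n / M^2 ≤ β⁻¹ / (r/2) := by
      intro n
      set g : ℂ → ℂ := fun w => (f^[n] w)⁻¹ with hgdef
      have hballmem : ∀ w : ℂ, w ∈ Metric.ball z r → dist z w < r := by
        intro w hw
        rw [Metric.mem_ball] at hw
        rwa [dist_comm]
      have hne : ∀ w ∈ Metric.ball z r, f^[n] w ≠ 0 := by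
        intro w hw h0
        have h := hβabs w (hballmem w hw) n
        rw [h0, norm_zero] at h
        linarith
      have hgdiff : DifferentiableOn ℂ g (Metric.ball z r) :=
        ((hdiff.iterate n).differentiableOn).inv hne
      have hgb : ∀ w ∈ Metric.sphere z (r/2), ‖g w‖ ≤ β⁻¹ := by
        intro w hw
        rw [Metric.mem_sphere] at hw
        have hwball : w ∈ Metric.ball z r := by
          rw [Metric.mem_ball, hw]; linarith
        show ‖(f^[n] w)⁻¹‖ ≤ β⁻¹
        rw [norm_inv]
        exact inv_anti₀ hβpos (hβabs w (hballmem w hwball) n)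
      have hcd : Complex.cderiv (r/2) g z = deriv g z :=
        Complex.cderiv_eq_deriv Metric.isOpen_ball hgdiff (by linarith)
          (Metric.closedBall_subset_ball (by linarith))
      have hle : ‖deriv g z‖ ≤ β⁻¹ / (r/2) :=
        hcd ▸ Complex.norm_cderiv_le (by linarith) hgb
      have hgderiv : deriv g z
          = -(∏ k ∈ Finset.range n, f (f^[k] z)) / (f^[n] z)^2 := by
        rw [hgdef]
        rw [show (fun w => (f^[n] w)⁻¹) = (f^[n])⁻¹ from rfl, deriv_inv'' ((hdiff.iterate n).differentiableAt)
          (hne z (Metric.mem_ball_self hr))]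
        rw [(hD n z).deriv]
      rw [hgderiv] at hle
      have hle' : ‖∏ k ∈ Finset.range n, f (f^[k] z)‖
          / (‖f^[n] z‖)^2 ≤ β⁻¹ / (r/2) := by
        rw [norm_div, norm_neg, norm_pow] at hle
        exact hle
      refine le_trans ?_ hle'
      have habspos : 0 < ‖f^[n] z‖ :=
        lt_of_lt_of_le hβpos (hβabs z (by simpa using hr) n)
      refine div_le_div₀ (norm_nonneg _) (hprod n) (by positivity) ?_
      exact pow_le_pow_left₀ habspos.le (hM' n) 2
    obtain ⟨n, hn⟩ := pow_unbounded_of_one_lt ((β⁻¹ / (r/2)) * M^2) hβ1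
    have hfin := hCauchy n
    rw [div_le_iff₀ (by positivity)] at hfin
    linarith
  exact (hAconn.subset_closure hAK hKA)

end Main
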